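/- Let x, y ∈ (0,1) with x ≠ y, and let m = min(x,y), M = max(x,y). Then d(x,y) · (sup_{z ∈ [m,M]} z(1−z)) ≥ (y−x)²/2 and d(x,y) · min{x(1−x), y(1−y)} ≤ (y−x)²/2; that is, (y−x)²/2 divided by the supremum of z(1−z) over the interval between x and y is a lower bound for d(x,y), and (y−x)²/2 divided by min{x(1−x), y(1−y)} is an upper bound for d(x,y). -/

import Mathlib

/-- The KL divergence `d(x,y)` between `Bernoulli(x)` and `Bernoulli(y)`. -/
noncomputable def klBer (x y : ℝ) : ℝ :=
  x * Real.log (x / y) + (1 - x) * Real.log ((1 - x) / (1 - y))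

lemma klBer_eq_integral (x y : ℝ) (hx : x ∈ Set.Ioo (0 : ℝ) 1) (hy : y ∈ Set.Ioo (0 : ℝ) 1) :
    klBer x y = ∫ t in x..y, (t - x) / (t * (1 - t)) := by
  have hsub : Set.uIcc x y ⊆ Set.Ioo (0 : ℝ) 1 :=
    (Set.ordConnected_Ioo).uIcc_subset hx hy
  have hcont : ContinuousOn (fun t => (t - x) / (t * (1 - t))) (Set.uIcc x y) := by
    apply ContinuousOn.div
    · fun_prop
    · fun_prop
    · intro t ht
      obtain ⟨h0, h1⟩ := hsub ht
      exact (mul_pos h0 (by linarith)).ne'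
  have hF : ∀ t ∈ Set.uIcc x y,
      HasDerivAt (fun t => -(x * Real.log t) - (1 - x) * Real.log (1 - t))
        ((t - x) / (t * (1 - t))) t := by
    intro t ht
    obtain ⟨h0, h1⟩ := hsub ht
    have h1' : (1 : ℝ) - t ≠ 0 := by linarith
    have d1 : HasDerivAt (fun t : ℝ => Real.log t) t⁻¹ t := Real.hasDerivAt_log h0.ne'
    have d2 : HasDerivAt (fun t : ℝ => Real.log (1 - t)) (-(1 - t)⁻¹) t := by
      have hlin : HasDerivAt (fun t : ℝ => 1 - t) (-1) t := by
        simpa using (hasDerivAt_id t).const_sub 1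
      exact ((Real.hasDerivAt_log h1').comp t hlin).congr_deriv (by ring)
    have := (d1.const_mul x).neg.sub (d2.const_mul (1 - x))
    refine this.congr_deriv ?_
    field_simp
    ring
  have key := intervalIntegral.integral_eq_sub_of_hasDerivAt hF hcont.intervalIntegrable
  rw [key]
  obtain ⟨hx0, hx1⟩ := hx
  obtain ⟨hy0, hy1⟩ := hy
  unfold klBer
  rw [Real.log_div hx0.ne' hy0.ne', Real.log_div (by linarith) (by linarith)]
  ring

lemma integ_lin_left (a b : ℝ) : (∫ t in a..b, (t - a)) = (b - a) ^ 2 / 2 := by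
  rw [intervalIntegral.integral_comp_sub_right (fun u => u) a, sub_self, integral_id]
  ring

lemma integ_lin_right (a b : ℝ) : (∫ t in a..b, (b - t)) = (b - a) ^ 2 / 2 := by
  rw [intervalIntegral.integral_comp_sub_left (fun u => u) b, sub_self, integral_id]
  ring

lemma quad_min (a b t : ℝ) (h1 : a ≤ t) (h2 : t ≤ b) :
    min (a * (1 - a)) (b * (1 - b)) ≤ t * (1 - t) := by
  rcases le_total (a * (1 - a)) (b * (1 - b)) with hc | hc
  · rw [min_eq_left hc]
    have key : (b - a) * (t * (1 - t) - a * (1 - a))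
        = (t - a) * ((b * (1 - b) - a * (1 - a)) + (b - a) * (b - t)) := by ring
    have h4 : 0 ≤ (t - a) * ((b * (1 - b) - a * (1 - a)) + (b - a) * (b - t)) :=
      mul_nonneg (by linarith) (add_nonneg (by linarith) (mul_nonneg (by linarith) (by linarith)))
    have h5 : 0 ≤ (b - a) * (t * (1 - t) - a * (1 - a)) := key ▸ h4
    rcases eq_or_lt_of_le (h1.trans h2) with h | h
    · subst h
      have ht : t = a := le_antisymm h2 h1
      subst ht; exact le_rfl
    · nlinarith [h5]
  · rw [min_eq_right hc]
    have key : (b - a) * (t * (1 - t) - b * (1 - b))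
        = (b - t) * ((a * (1 - a) - b * (1 - b)) + (b - a) * (t - a)) := by ring
    have h4 : 0 ≤ (b - t) * ((a * (1 - a) - b * (1 - b)) + (b - a) * (t - a)) :=
      mul_nonneg (by linarith) (add_nonneg (by linarith) (mul_nonneg (by linarith) (by linarith)))
    have h5 : 0 ≤ (b - a) * (t * (1 - t) - b * (1 - b)) := key ▸ h4
    rcases eq_or_lt_of_le (h1.trans h2) with h | h
    · subst h
      have ht : t = a := le_antisymm h2 h1
      subst ht; exact le_rfl
    · nlinarith [h5]

/-- For `x ≠ y` in `(0,1)`, with `m = min(x,y)` and `M = max(x,y)`: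
`d(x,y) · sup_{z∈[m,M]} z(1−z) ≥ (y−x)²/2` and
`d(x,y) · min{x(1−x), y(1−y)} ≤ (y−x)²/2`. -/
theorem stmt_8 (x y : ℝ) (hx : x ∈ Set.Ioo (0 : ℝ) 1) (hy : y ∈ Set.Ioo (0 : ℝ) 1)
    (hxy : x ≠ y) :
    (y - x) ^ 2 / 2
        ≤ klBer x y * sSup ((fun z => z * (1 - z)) '' Set.Icc (min x y) (max x y)) ∧
      klBer x y * min (x * (1 - x)) (y * (1 - y)) ≤ (y - x) ^ 2 / 2 := by
  obtain ⟨hx0, hx1⟩ := hx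
  obtain ⟨hy0, hy1⟩ := hy
  set S := sSup ((fun z => z * (1 - z)) '' Set.Icc (min x y) (max x y)) with hS
  set mn := min (x * (1 - x)) (y * (1 - y)) with hmn
  have hmn0 : 0 < mn := lt_min (mul_pos hx0 (by linarith)) (mul_pos hy0 (by linarith))
  have hbdd : BddAbove ((fun z => z * (1 - z)) '' Set.Icc (min x y) (max x y)) :=
    (isCompact_Icc.image (by fun_prop)).bddAbove
  have hSub : ∀ t ∈ Set.Icc (min x y) (max x y), t * (1 - t) ≤ S := fun t ht =>
    le_csSup hbdd (Set.mem_image_of_mem _ ht)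
  have hxmem : x ∈ Set.Icc (min x y) (max x y) := ⟨min_le_left x y, le_max_left x y⟩
  have hS0 : 0 < S := lt_of_lt_of_le (mul_pos hx0 (by linarith)) (hSub x hxmem)
  have hmnle : ∀ t ∈ Set.Icc (min x y) (max x y), mn ≤ t * (1 - t) := by
    intro t ht
    rcases le_total x y with h | h
    · have := quad_min x y t (by simpa [min_eq_left h] using ht.1)
        (by simpa [max_eq_right h] using ht.2)
      simpa [hmn] using this
    · have := quad_min y x t (by simpa [min_eq_right h] using ht.1)
        (by simpa [max_eq_left h] using ht.2)
      rw [hmn, min_comm]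
      simpa using this
  have hkl := klBer_eq_integral x y ⟨hx0, hx1⟩ ⟨hy0, hy1⟩
  have hintf : IntervalIntegrable (fun t => (t - x) / (t * (1 - t))) MeasureTheory.volume x y := by
    apply ContinuousOn.intervalIntegrable
    apply ContinuousOn.div
    · fun_prop
    · fun_prop
    · intro t ht
      have := (Set.ordConnected_Ioo).uIcc_subset
        (⟨hx0, hx1⟩ : x ∈ Set.Ioo (0 : ℝ) 1) ⟨hy0, hy1⟩ ht
      exact (mul_pos this.1 (by linarith [this.2])).ne'
  rcases lt_or_gt_of_ne hxy with hlt | hlt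
  · -- x < y
    have hicc : Set.Icc (min x y) (max x y) = Set.Icc x y := by
      rw [min_eq_left hlt.le, max_eq_right hlt.le]
    constructor
    · have hle : ∀ t ∈ Set.Icc x y, (t - x) / S ≤ (t - x) / (t * (1 - t)) := by
        intro t ht
        have h1 : t * (1 - t) ≤ S := hSub t (by rw [hicc]; exact ht)
        have h2 : 0 < t * (1 - t) := mul_pos (lt_of_lt_of_le hx0 ht.1)
          (by linarith [ht.2, hy1])
        have h3 : 0 ≤ t - x := by linarith [ht.1]
        exact div_le_div_of_nonneg_left h3 h2 h1
      have hmono := intervalIntegral.integral_mono_on hlt.le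
        (by apply Continuous.intervalIntegrable; fun_prop) hintf hle
      have hcalc : (∫ t in x..y, (t - x) / S) = ((y - x) ^ 2 / 2) / S := by
        rw [intervalIntegral.integral_div, integ_lin_left]
      rw [hcalc] at hmono
      rw [hkl, ← div_le_iff₀ hS0]
      exact hmono
    · have hle : ∀ t ∈ Set.Icc x y, (t - x) / (t * (1 - t)) ≤ (t - x) / mn := by
        intro t ht
        have h1 : mn ≤ t * (1 - t) := hmnle t (by rw [hicc]; exact ht)
        have h3 : 0 ≤ t - x := by linarith [ht.1]
        exact div_le_div_of_nonneg_left h3 hmn0 h1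
      have hmono := intervalIntegral.integral_mono_on hlt.le hintf
        (by apply Continuous.intervalIntegrable; fun_prop) hle
      have hcalc : (∫ t in x..y, (t - x) / mn) = ((y - x) ^ 2 / 2) / mn := by
        rw [intervalIntegral.integral_div, integ_lin_left]
      rw [hcalc] at hmono
      rw [hkl, ← le_div_iff₀ hmn0]
      exact hmono
  · -- y < x
    have hicc : Set.Icc (min x y) (max x y) = Set.Icc y x := by
      rw [min_eq_right hlt.le, max_eq_left hlt.le]
    have hswap : klBer x y = ∫ t in y..x, (x - t) / (t * (1 - t)) := by
      rw [hkl, intervalIntegral.integral_symm, ← intervalIntegral.integral_neg]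
      congr 1
      ext t
      ring
    have hintg : IntervalIntegrable (fun t => (x - t) / (t * (1 - t)))
        MeasureTheory.volume y x := by
      apply ContinuousOn.intervalIntegrable
      apply ContinuousOn.div
      · fun_prop
      · fun_prop
      · intro t ht
        have := (Set.ordConnected_Ioo).uIcc_subset
          (⟨hy0, hy1⟩ : y ∈ Set.Ioo (0 : ℝ) 1) ⟨hx0, hx1⟩ ht
        exact (mul_pos this.1 (by linarith [this.2])).ne'
    constructor
    · have hle : ∀ t ∈ Set.Icc y x, (x - t) / S ≤ (x - t) / (t * (1 - t)) := by
        intro t ht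
        have h1 : t * (1 - t) ≤ S := hSub t (by rw [hicc]; exact ht)
        have h2 : 0 < t * (1 - t) := mul_pos (lt_of_lt_of_le hy0 ht.1)
          (by linarith [ht.2, hx1])
        have h3 : 0 ≤ x - t := by linarith [ht.2]
        exact div_le_div_of_nonneg_left h3 h2 h1
      have hmono := intervalIntegral.integral_mono_on hlt.le
        (by apply Continuous.intervalIntegrable; fun_prop) hintg hle
      have hcalc : (∫ t in y..x, (x - t) / S) = ((y - x) ^ 2 / 2) / S := by
        rw [intervalIntegral.integral_div, integ_lin_right]
        ring_nf
      rw [hcalc] at hmono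
      rw [hswap, ← div_le_iff₀ hS0]
      exact hmono
    · have hle : ∀ t ∈ Set.Icc y x, (x - t) / (t * (1 - t)) ≤ (x - t) / mn := by
        intro t ht
        have h1 : mn ≤ t * (1 - t) := hmnle t (by rw [hicc]; exact ht)
        have h2 : 0 < t * (1 - t) := mul_pos (lt_of_lt_of_le hy0 ht.1)
          (by linarith [ht.2, hx1])
        have h3 : 0 ≤ x - t := by linarith [ht.2]
        exact div_le_div_of_nonneg_left h3 hmn0 h1
      have hmono := intervalIntegral.integral_mono_on hlt.le hintg
        (by apply Continuous.intervalIntegrable; fun_prop) hle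
      have hcalc : (∫ t in y..x, (x - t) / mn) = ((y - x) ^ 2 / 2) / mn := by
        rw [intervalIntegral.integral_div, integ_lin_right]
        ring_nf
      rw [hcalc] at hmono
      rw [hswap, ← le_div_iff₀ hmn0]
      exact hmono
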